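/- The number of tuples (k_1, ..., k_{n-2}) of nonnegative integers satisfying k_1 + ... + k_j ≤ j for all j = 1, ..., n-2 is the Catalan number C_{n-1} = (1/n)·C(2(n-1), n-1), for n ≥ 2. -/

import Mathlib

open Finset

/-- Catalan triangle numbers: `catT m t` counts sequences `(k_1, …, k_m)` of
nonnegative integers with partial sums `k_1 + ⋯ + k_j ≤ j + t + 1`. -/
def catT : ℕ → ℕ → ℕ
  | 0, _ => 1
  | m + 1, t => ∑ s ∈ Finset.range (t + 2), catT m s

lemma catT_zero (t : ℕ) : catT 0 t = 1 := rfl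

lemma catT_succ (m t : ℕ) : catT (m + 1) t = ∑ s ∈ Finset.range (t + 2), catT m s := rfl

lemma catT_succ_zero (m : ℕ) : catT (m + 1) 0 = catT m 0 + catT m 1 := by
  rw [catT_succ]
  simp [Finset.sum_range_succ]

lemma catT_succ_succ (m t : ℕ) :
    catT (m + 1) (t + 1) = catT (m + 1) t + catT m (t + 2) := by
  rw [catT_succ, catT_succ, Finset.sum_range_succ]

/-- Closed form for the Catalan triangle numbers (multiplied out to stay in `ℕ`). -/
lemma catT_id (m t : ℕ) :
    (m + t + 1) * ((m + t + 2) * catT m t) =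
      (t + 2) * ((2 * m + t + 1) * Nat.choose (2 * m + t) m) := by
  induction m generalizing t with
  | zero =>
    rw [catT_zero, show 2 * 0 + t = t from by ring, Nat.choose_zero_right]
    ring
  | succ m ih =>
    induction t with
    | zero =>
      have h0 := ih 0
      have h1 := ih 1
      rw [show m + 0 + 1 = m + 1 from by ring, show m + 0 + 2 = m + 2 from by ring,
        show 2 * m + 0 + 1 = 2 * m + 1 from by ring, show 2 * m + 0 = 2 * m from by ring] at h0
      rw [show m + 1 + 1 = m + 2 from by ring, show m + 1 + 2 = m + 3 from by ring,
        show 2 * m + 1 + 1 = 2 * m + 2 from by ring] at h1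
      -- B1 : (2m+1) * C(2m,m) = (m+1) * C(2m+1,m)
      have hB1 : (2 * m + 1) * Nat.choose (2 * m) m = (m + 1) * Nat.choose (2 * m + 1) m := by
        have h := Nat.add_one_mul_choose_eq (2 * m) m
        rw [Nat.choose_symm_half] at h
        rw [h]; ring
      -- B2 : C(2m+2, m+1) = 2 * C(2m+1, m)
      have hB2 : Nat.choose (2 * m + 2) (m + 1) = 2 * Nat.choose (2 * m + 1) m := by
        rw [show 2 * m + 2 = (2 * m + 1) + 1 from by ring, Nat.choose_succ_succ,
          Nat.choose_symm_half]
        ring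
      -- from h0 and hB1 : (m+2) * T(m,0) = 2 * C(2m+1,m)
      have e0 : (m + 2) * catT m 0 = 2 * Nat.choose (2 * m + 1) m := by
        have hcancel : (m + 1) * ((m + 2) * catT m 0) =
            (m + 1) * (2 * Nat.choose (2 * m + 1) m) := by
          rw [h0, hB1]; ring
        exact Nat.eq_of_mul_eq_mul_left (Nat.succ_pos m) hcancel
      rw [catT_succ_zero, show 2 * (m + 1) + 0 = 2 * m + 2 from by ring]
      zify at e0 h1 hB2 ⊢
      linear_combination ((m : ℤ) + 3) * e0 + h1 + (-2 * (2 * (m : ℤ) + 3)) * hB2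
    | succ t iht =>
      have hP := iht
      have hI := ih (t + 2)
      rw [show 2 * (m + 1) + t = 2 * m + t + 2 from by ring] at hP
      rw [show 2 * m + (t + 2) = 2 * m + t + 2 from by ring] at hI
      -- x := C(2m+t+2, m+1), y := C(2m+t+2, m)
      -- x * (m+1) = y * (m+t+2)
      have hB3 : Nat.choose (2 * m + t + 2) (m + 1) * (m + 1) =
          Nat.choose (2 * m + t + 2) m * (m + t + 2) := by
        have h := Nat.choose_succ_right_eq (2 * m + t + 2) m
        rw [show 2 * m + t + 2 - m = m + t + 2 from by omega] at h
        exact h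
      rw [show 2 * (m + 1) + (t + 1) = (2 * m + t + 2) + 1 from by ring,
        Nat.choose_succ_succ, catT_succ_succ]
      apply Nat.eq_of_mul_eq_mul_left (show 0 < m + t + 2 by omega)
      zify at hP hI hB3 ⊢
      linear_combination ((m : ℤ) + t + 4) * hP + ((m : ℤ) + t + 2) * hI
        + (-2 * (m : ℤ)) * hB3

/-- The Catalan triangle numbers on the diagonal are Catalan numbers. -/
lemma catT_eq_catalan (m : ℕ) : catT m 0 = catalan (m + 1) := by
  have h := catT_id m 0
  rw [show m + 0 + 1 = m + 1 from by ring, show m + 0 + 2 = m + 2 from by ring,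
    show 2 * m + 0 + 1 = 2 * m + 1 from by ring, show 2 * m + 0 = 2 * m from by ring] at h
  have hcb : (m + 1) * Nat.centralBinom (m + 1) = (m + 1) * ((m + 2) * catT m 0) := by
    rw [Nat.succ_mul_centralBinom_succ, Nat.centralBinom, h]; ring
  have h2 : (m + 2) * catT m 0 = Nat.centralBinom (m + 1) :=
    (Nat.eq_of_mul_eq_mul_left (Nat.succ_pos m) hcb).symm
  have h3 : (m + 2) * catalan (m + 1) = Nat.centralBinom (m + 1) :=
    succ_mul_catalan_eq_centralBinom (m + 1)
  have : (m + 2) * catT m 0 = (m + 2) * catalan (m + 1) := by rw [h2, h3]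
  exact Nat.eq_of_mul_eq_mul_left (by omega) this

/-- The set of bounded sequences with partial sums `≤ j + t`. -/
def NS (B m t : ℕ) : Finset (Fin m → Fin B) :=
  Finset.univ.filter fun k => ∀ j : Fin m, (∑ i ∈ Finset.Iic j, (k i : ℕ)) ≤ j.1 + t

lemma Iic_fin_zero {m : ℕ} : (Finset.Iic (0 : Fin (m + 1))) = {0} := by
  ext i
  simp [Fin.le_zero_iff]

lemma Iic_fin_succ {m : ℕ} (j : Fin m) :
    Finset.Iic j.succ = insert 0 ((Finset.Iic j).map (Fin.succEmb m)) := by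
  ext i
  simp only [Finset.mem_Iic, Finset.mem_insert, Finset.mem_map]
  constructor
  · intro hi
    rcases Fin.eq_zero_or_eq_succ i with h0 | ⟨i', rfl⟩
    · exact Or.inl h0
    · refine Or.inr ⟨i', ?_, rfl⟩
      simpa [Finset.mem_Iic] using (Fin.succ_le_succ_iff).mp hi
  · rintro (rfl | ⟨i', hi', rfl⟩)
    · exact Fin.zero_le _
    · have hle : i' ≤ j := by simpa using hi'
      simpa [Fin.coe_succEmb] using Fin.succ_le_succ_iff.mpr hle

lemma sum_Iic_cons {B m : ℕ} (a : Fin B) (k' : Fin m → Fin B) (j : Fin m) :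
    ∑ i ∈ Finset.Iic j.succ, ((Fin.cons a k' : Fin (m + 1) → Fin B) i : ℕ) =
      (a : ℕ) + ∑ i ∈ Finset.Iic j, (k' i : ℕ) := by
  rw [Iic_fin_succ, Finset.sum_insert, Finset.sum_map]
  · simp [Fin.coe_succEmb]
  · simp only [Finset.mem_map]
    rintro ⟨i', -, hi'⟩
    exact (Fin.succ_ne_zero i') (by simpa [Fin.coe_succEmb] using hi')

lemma mem_NS_cons {B m t : ℕ} (a : Fin B) (k' : Fin m → Fin B) :
    Fin.cons a k' ∈ NS B (m + 1) t ↔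
      (a : ℕ) ≤ t ∧ ∀ j : Fin m, (a : ℕ) + ∑ i ∈ Finset.Iic j, (k' i : ℕ) ≤ j.1 + 1 + t := by
  simp only [NS, Finset.mem_filter, Finset.mem_univ, true_and]
  rw [Fin.forall_fin_succ]
  constructor
  · rintro ⟨h0, hs⟩
    constructor
    · simpa [Iic_fin_zero] using h0
    · intro j
      have h := hs j
      rw [sum_Iic_cons] at h
      simpa [Fin.val_succ, Nat.add_right_comm] using h
  · rintro ⟨h0, hs⟩
    constructor
    · simpa [Iic_fin_zero] using h0
    · intro j
      rw [sum_Iic_cons]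
      have h := hs j
      simpa [Fin.val_succ, Nat.add_right_comm] using h

lemma NS_fiber_card {B m t : ℕ} (a : Fin B) (ha : (a : ℕ) ≤ t + 1) :
    ((NS B (m + 1) (t + 1)).filter fun k => k 0 = a).card =
      (NS B m (t + 2 - (a : ℕ))).card := by
  refine Finset.card_bij' (fun k _ => Fin.tail k) (fun k' _ => Fin.cons a k')
    ?_ ?_ ?_ ?_
  · -- maps into
    intro k hk
    simp only [Finset.mem_filter] at hk
    obtain ⟨hk1, hk2⟩ := hk
    have hcons : Fin.cons (k 0) (Fin.tail k) = k := Fin.cons_self_tail k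
    rw [← hcons, hk2, mem_NS_cons] at hk1
    obtain ⟨-, hs⟩ := hk1
    simp only [NS, Finset.mem_filter, Finset.mem_univ, true_and]
    intro j
    have h := hs j
    omega
  · -- reverse maps into
    intro k' hk'
    simp only [NS, Finset.mem_filter, Finset.mem_univ, true_and] at hk'
    refine Finset.mem_filter.mpr ⟨?_, by simp⟩
    rw [mem_NS_cons]
    refine ⟨by omega, fun j => ?_⟩
    have h := hk' j
    omega
  · intro k hk
    simp only [Finset.mem_filter] at hk
    have h := Fin.cons_self_tail k
    rw [hk.2] at h
    exact h
  · intro k' _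
    simp

lemma NS_fiber_card_zero {B m t : ℕ} (a : Fin B) (ha : t + 1 < (a : ℕ)) :
    ((NS B (m + 1) (t + 1)).filter fun k => k 0 = a).card = 0 := by
  rw [Finset.card_eq_zero, Finset.filter_eq_empty_iff]
  intro k hk
  simp only [NS, Finset.mem_filter, Finset.mem_univ, true_and] at hk
  intro h0
  have h := hk 0
  rw [Iic_fin_zero] at h
  simp only [Finset.sum_singleton, Fin.val_zero] at h
  rw [h0] at h
  omega

lemma NS_card_rec {B m t : ℕ} (hB : t + 2 ≤ B) :
    (NS B (m + 1) (t + 1)).card = ∑ s ∈ Finset.range (t + 2), (NS B m (s + 1)).card := by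
  rw [Finset.card_eq_sum_card_fiberwise (f := fun k => k 0) (t := Finset.univ)
    (fun k _ => Finset.mem_univ _)]
  have hfib : ∀ a : Fin B, ((NS B (m + 1) (t + 1)).filter fun k => k 0 = a).card =
      if (a : ℕ) ≤ t + 1 then (NS B m (t + 2 - (a : ℕ))).card else 0 := by
    intro a
    split_ifs with h
    · exact NS_fiber_card a h
    · exact NS_fiber_card_zero a (by omega)
  simp_rw [hfib]
  rw [Fin.sum_univ_eq_sum_range (fun i => if i ≤ t + 1 then (NS B m (t + 2 - i)).card else 0) B]
  rw [← Finset.sum_subset (Finset.range_subset_range.mpr hB)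
      (fun x _ hx => by
        simp only [Finset.mem_range] at hx
        exact if_neg (by omega))]
  rw [Finset.sum_congr rfl (fun x hx => by
      rw [if_pos]; simp only [Finset.mem_range] at hx; omega)]
  rw [← Finset.sum_range_reflect (fun s => (NS B m (s + 1)).card) (t + 2)]
  apply Finset.sum_congr rfl
  intro x hx
  simp only [Finset.mem_range] at hx
  have hxx : t + 2 - 1 - x + 1 = t + 2 - x := by omega
  rw [hxx]

lemma NS_card {B m t : ℕ} (h : m + t + 1 ≤ B) : (NS B m (t + 1)).card = catT m t := by
  induction m generalizing t with
  | zero =>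
    rw [catT_zero]
    have huniv : NS B 0 (t + 1) = Finset.univ := by
      ext k
      simp only [NS, Finset.mem_filter, Finset.mem_univ, true_and, iff_true]
      intro j
      exact j.elim0
    rw [huniv, Finset.card_univ]
    simp [Fintype.card_pi]
  | succ m ih =>
    rw [NS_card_rec (by omega), catT_succ]
    apply Finset.sum_congr rfl
    intro s hs
    simp only [Finset.mem_range] at hs
    exact ih (by omega)

open Finset in
/-- The number of tuples `(k_1, …, k_{n-2})` of nonnegative integers with all partial
sums `k_1 + ⋯ + k_j ≤ j` is the Catalan number `C_{n-1} = C(2(n-1), n-1)/n`. -/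
theorem stmt6 (n : ℕ) (hn : 2 ≤ n) :
    (Finset.univ.filter (fun k : Fin (n - 2) → Fin n =>
        ∀ j : Fin (n - 2), (∑ i ∈ Finset.univ.filter (· ≤ j), (k i : ℕ)) ≤ j.val + 1)).card =
      catalan (n - 1) ∧
    catalan (n - 1) = Nat.choose (2 * (n - 1)) (n - 1) / n := by
  constructor
  · have hIic : ∀ j : Fin (n - 2), (Finset.univ.filter (· ≤ j)) = Finset.Iic j := by
      intro j; ext x; simp
    have hset : (Finset.univ.filter (fun k : Fin (n - 2) → Fin n =>
        ∀ j : Fin (n - 2), (∑ i ∈ Finset.univ.filter (· ≤ j), (k i : ℕ)) ≤ j.val + 1)) =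
        NS n (n - 2) 1 := by
      unfold NS
      apply Finset.filter_congr
      intro k _
      constructor
      · intro h j; rw [← hIic j]; exact h j
      · intro h j; rw [hIic j]; exact h j
    rw [hset]
    have h1 : (NS n (n - 2) (0 + 1)).card = catT (n - 2) 0 := NS_card (by omega)
    simpa [catT_eq_catalan, show n - 2 + 1 = n - 1 by omega] using h1
  · rw [catalan_eq_centralBinom_div, Nat.centralBinom, show n - 1 + 1 = n by omega]
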